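/- Let μ, r ∈ ℝ, σ > 0, γ > 0 with γ ≠ 1, λ ≥ 0, T > 0. Define V(t,w) = ( w^{1−γ} exp( (r + (μ−r)²/(2γσ²))(1−γ)(T−t) − λ(1−γ)(T−t)/2 ) − 1 )/(1−γ) for t ∈ [0,T] and w > 0, where w^{1−γ} is the real power. Then for every t ∈ [0,T) and w > 0: (i) the function u ↦ ∂V/∂t + (r + (μ−r)u) w V_w + (1/2)σ²(u² + λ/(γσ²)) w² V_{ww} attains its supremum over u ∈ ℝ at u* = (μ−r)/(γσ²); (ii) this supremum equals 0; and (iii) V(T,w) = (w^{1−γ} − 1)/(1−γ). -/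

import Mathlib

open Real

/-- The expression inside the supremum of the Black–Scholes exploratory HJB equation:
`u ↦ ∂V/∂t + (r + (μ−r)u) w V_w + (1/2)σ²(u² + λ/(γσ²)) w² V_ww`. -/
noncomputable def HJBtermBS (V : ℝ → ℝ → ℝ) (μ σ r γ lam : ℝ) (t w u : ℝ) : ℝ :=
  deriv (fun s => V s w) t
    + (r + (μ - r) * u) * w * deriv (fun w' => V t w') w
    + (1/2) * σ^2 * (u^2 + lam / (γ * σ^2)) * w^2
        * deriv (fun w' => deriv (fun w'' => V t w'') w') w

/-- Black–Scholes specialization of Theorem 1: the function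
`V(t,w) = (w^{1−γ} exp((r + (μ−r)²/(2γσ²))(1−γ)(T−t) − λ(1−γ)(T−t)/2) − 1)/(1−γ)`
solves the exploratory HJB equation, with the supremum attained at the Merton fraction
`u* = (μ−r)/(γσ²)` and CRRA terminal condition. -/
theorem stmt16 (μ r σ γ lam T : ℝ) (hσ : 0 < σ) (hγ : 0 < γ) (hγ1 : γ ≠ 1)
    (hlam : 0 ≤ lam) (hT : 0 < T)
    (V : ℝ → ℝ → ℝ)
    (hV : ∀ t w, V t w =
      (w ^ (1 - γ) * Real.exp ((r + (μ - r)^2 / (2 * γ * σ^2)) * (1 - γ) * (T - t)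
          - lam * (1 - γ) * (T - t) / 2) - 1) / (1 - γ)) :
    ∀ t ∈ Set.Ico 0 T, ∀ w : ℝ, 0 < w →
      (∀ u : ℝ, HJBtermBS V μ σ r γ lam t w u ≤
        HJBtermBS V μ σ r γ lam t w ((μ - r) / (γ * σ^2))) ∧
      HJBtermBS V μ σ r γ lam t w ((μ - r) / (γ * σ^2)) = 0 ∧
      V T w = (w ^ (1 - γ) - 1) / (1 - γ) := by
  intro t _ w hw
  have hγ' : (1:ℝ) - γ ≠ 0 := sub_ne_zero.mpr (fun h => hγ1 h.symm)
  set A : ℝ := r + (μ - r)^2 / (2 * γ * σ^2) with hA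
  set c : ℝ := (A - lam/2) * (1 - γ) with hc
  set Et : ℝ := Real.exp (c * (T - t)) with hEt
  have hexp : ∀ s, A * (1 - γ) * (T - s) - lam * (1 - γ) * (T - s) / 2 = c * T - c * s := by
    intro s; simp only [hc]; ring
  -- time derivative
  have hdt : deriv (fun s => V s w) t = (w ^ (1-γ) * Et * (-c)) / (1 - γ) := by
    have heq : (fun s => V s w) = fun s => (w ^ (1-γ) * Real.exp (c*T - c*s) - 1) / (1 - γ) := by
      funext s; rw [hV, hexp]
    rw [heq]
    have h1 : HasDerivAt (fun s : ℝ => c*T - c*s) (-c) t := by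
      exact ((hasDerivAt_const t (c*T)).sub ((hasDerivAt_id t).const_mul c)).congr_deriv (by ring)
    have h2 := (((h1.exp.const_mul (w ^ (1-γ))).sub_const 1).div_const (1-γ))
    have : Et = Real.exp (c*T - c*t) := by rw [hEt]; ring_nf
    rw [this]
    rw [h2.deriv]; ring
  -- w derivative as a function
  have hdw : ∀ w' : ℝ, 0 < w' → deriv (fun x => V t x) w' = Et * w' ^ (-γ) := by
    intro w' hw'
    have heq : (fun x => V t x) = fun x => (x ^ (1-γ) * Et - 1) / (1 - γ) := by
      funext x; rw [hV, hEt]; congr 2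
      rw [hexp t]; ring_nf
    rw [heq]
    have h1 := (((Real.hasDerivAt_rpow_const (p := 1-γ) (Or.inl hw'.ne')).mul_const Et).sub_const 1).div_const (1-γ)
    rw [h1.deriv]
    have : (1:ℝ) - γ - 1 = -γ := by ring
    rw [this]; field_simp
  -- second derivative
  have hdww : deriv (fun w' => deriv (fun x => V t x) w') w = Et * (-γ * w ^ (-γ - 1)) := by
    have hev : (fun w' => deriv (fun x => V t x) w') =ᶠ[nhds w] fun w' => Et * w' ^ (-γ) := by
      filter_upwards [eventually_gt_nhds hw] with w' hw' using hdw w' hw'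
    rw [hev.deriv_eq]
    have h1 := (Real.hasDerivAt_rpow_const (p := -γ) (x := w) (Or.inl hw.ne')).const_mul Et
    rw [h1.deriv]
  -- key formula
  have hP : (0:ℝ) < w ^ (1-γ) := Real.rpow_pos_of_pos hw _
  have hw1 : w * w ^ (-γ) = w ^ (1-γ) := by
    rw [show (1:ℝ)-γ = 1 + -γ by ring, Real.rpow_add hw, Real.rpow_one]
  have hw2 : w^2 * w ^ (-γ - 1) = w ^ (1-γ) := by
    rw [show (1:ℝ)-γ = 2 + (-γ-1) by ring, Real.rpow_add hw]
    congr 1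
    rw [← Real.rpow_natCast w 2]; norm_num
  have key : ∀ u : ℝ, HJBtermBS V μ σ r γ lam t w u =
      Et * w ^ (1-γ) * (-(c)/(1-γ) + (r + (μ - r)*u) - (1/2)*σ^2*(u^2 + lam/(γ*σ^2))*γ) := by
    intro u
    rw [HJBtermBS, hdt, hdw w hw, hdww]
    have e1 : (r + (μ - r) * u) * w * (Et * w ^ (-γ)) = (r + (μ-r)*u) * Et * w^(1-γ) := by
      rw [← hw1]; ring
    have e2 : (1/2) * σ^2 * (u^2 + lam / (γ * σ^2)) * w^2 * (Et * (-γ * w ^ (-γ-1)))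
        = (1/2) * σ^2 * (u^2 + lam / (γ * σ^2)) * (-γ) * Et * w^(1-γ) := by
      rw [← hw2]; ring
    rw [e1, e2]; ring
  have hσ2 : γ * σ^2 ≠ 0 := by positivity
  refine ⟨fun u => ?_, ?_, ?_⟩
  · rw [key, key]
    have hEP : 0 < Et * w ^ (1-γ) := by positivity
    apply mul_le_mul_of_nonneg_left _ hEP.le
    have h := sq_nonneg (u - (μ - r)/(γ * σ^2))
    have hq : (0:ℝ) < γ * σ^2 := by positivity
    have expand : (r + (μ - r)*((μ-r)/(γ*σ^2))) - (1/2)*σ^2*(((μ-r)/(γ*σ^2))^2 + lam/(γ*σ^2))*γ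
        - ((r + (μ - r)*u) - (1/2)*σ^2*(u^2 + lam/(γ*σ^2))*γ)
        = (γ*σ^2/2) * (u - (μ-r)/(γ*σ^2))^2 := by
      field_simp; ring
    nlinarith [mul_nonneg (le_of_lt (by positivity : (0:ℝ) < γ*σ^2/2)) h]
  · rw [key]
    have : -(c)/(1-γ) + (r + (μ - r)*((μ-r)/(γ*σ^2))) - (1/2)*σ^2*(((μ-r)/(γ*σ^2))^2 + lam/(γ*σ^2))*γ = 0 := by
      rw [hc, hA]; field_simp; ring
    rw [this, mul_zero]
  · rw [hV]; simp
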